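/- For every integer n ≥ 2 and every x ∈ [−1,1], one has T_n(x) + 2 − ((x+2)/n²)·T_n′(x) ≥ 0. -/
import Mathlib

open Polynomial Real

set_option maxHeartbeats 1000000

section Aux

open Real

private lemma nonneg_of_deriv' {f f' : ℝ → ℝ} (hd : ∀ s, HasDerivAt f (f' s) s)
    (h' : ∀ s, 0 ≤ s → 0 ≤ f' s) (h0 : f 0 = 0) {t : ℝ} (ht : 0 ≤ t) : 0 ≤ f t := by
  have hdiff : Differentiable ℝ f := fun s => (hd s).differentiableAt
  have hmono : MonotoneOn f (Set.Ici 0) := by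
    apply monotoneOn_of_deriv_nonneg (convex_Ici 0) hdiff.continuous.continuousOn
      (fun s _ => (hdiff s).differentiableWithinAt)
    intro s hs
    rw [(hd s).deriv]
    exact h' s (le_of_lt (by simpa using hs))
  calc (0:ℝ) = f 0 := h0.symm
    _ ≤ f t := hmono Set.self_mem_Ici ht ht

private lemma sin_ge3 {t : ℝ} (ht : 0 ≤ t) : t - t^3/6 ≤ Real.sin t := by
  have h := nonneg_of_deriv' (f := fun y => Real.sin y - (y - y^3/6))
    (f' := fun y => Real.cos y - (1 - y^2/2)) (fun s => by
      have : HasDerivAt (fun y : ℝ => Real.sin y - (y - y^3/6))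
          (Real.cos s - (1 - 3*s^(3-1)/6)) s :=
        (Real.hasDerivAt_sin s).sub ((hasDerivAt_id s).sub ((hasDerivAt_pow 3 s).div_const 6))
      convert this using 1
      ring)
    (fun s _ => by nlinarith [Real.one_sub_sq_div_two_le_cos (x := s)])
    (by norm_num) ht
  linarith

private lemma cos_le4 {t : ℝ} (ht : 0 ≤ t) : Real.cos t ≤ 1 - t^2/2 + t^4/24 := by
  have h := nonneg_of_deriv' (f := fun y => 1 - y^2/2 + y^4/24 - Real.cos y)
    (f' := fun y => Real.sin y - (y - y^3/6)) (fun s => by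
      have : HasDerivAt (fun y : ℝ => 1 - y^2/2 + y^4/24 - Real.cos y)
          (0 - 2*s^(2-1)/2 + 4*s^(4-1)/24 - (-Real.sin s)) s :=
        ((((hasDerivAt_const s (1:ℝ)).sub ((hasDerivAt_pow 2 s).div_const 2)).add
          ((hasDerivAt_pow 4 s).div_const 24)).sub (Real.hasDerivAt_cos s))
      convert this using 1
      ring)
    (fun s hs => by linarith [sin_ge3 hs])
    (by norm_num) ht
  linarith

private lemma sin_le5 {t : ℝ} (ht : 0 ≤ t) : Real.sin t ≤ t - t^3/6 + t^5/120 := by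
  have h := nonneg_of_deriv' (f := fun y => y - y^3/6 + y^5/120 - Real.sin y)
    (f' := fun y => 1 - y^2/2 + y^4/24 - Real.cos y) (fun s => by
      have : HasDerivAt (fun y : ℝ => y - y^3/6 + y^5/120 - Real.sin y)
          (1 - 3*s^(3-1)/6 + 5*s^(5-1)/120 - Real.cos s) s :=
        ((((hasDerivAt_id s).sub ((hasDerivAt_pow 3 s).div_const 6)).add
          ((hasDerivAt_pow 5 s).div_const 120)).sub (Real.hasDerivAt_sin s))
      convert this using 1
      ring)
    (fun s hs => by linarith [cos_le4 hs])
    (by norm_num) ht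
  linarith

private lemma cos_ge6 {t : ℝ} (ht : 0 ≤ t) : 1 - t^2/2 + t^4/24 - t^6/720 ≤ Real.cos t := by
  have h := nonneg_of_deriv' (f := fun y => Real.cos y - (1 - y^2/2 + y^4/24 - y^6/720))
    (f' := fun y => (y - y^3/6 + y^5/120) - Real.sin y) (fun s => by
      have : HasDerivAt (fun y : ℝ => Real.cos y - (1 - y^2/2 + y^4/24 - y^6/720))
          (-Real.sin s - (0 - 2*s^(2-1)/2 + 4*s^(4-1)/24 - 6*s^(6-1)/720)) s :=
        (Real.hasDerivAt_cos s).sub ((((hasDerivAt_const s (1:ℝ)).sub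
          ((hasDerivAt_pow 2 s).div_const 2)).add ((hasDerivAt_pow 4 s).div_const 24)).sub
          ((hasDerivAt_pow 6 s).div_const 720))
      convert this using 1
      ring)
    (fun s hs => by linarith [sin_le5 hs])
    (by norm_num) ht
  linarith

private lemma sin_ge7 {t : ℝ} (ht : 0 ≤ t) :
    t - t^3/6 + t^5/120 - t^7/5040 ≤ Real.sin t := by
  have h := nonneg_of_deriv' (f := fun y => Real.sin y - (y - y^3/6 + y^5/120 - y^7/5040))
    (f' := fun y => Real.cos y - (1 - y^2/2 + y^4/24 - y^6/720)) (fun s => by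
      have : HasDerivAt (fun y : ℝ => Real.sin y - (y - y^3/6 + y^5/120 - y^7/5040))
          (Real.cos s - (1 - 3*s^(3-1)/6 + 5*s^(5-1)/120 - 7*s^(7-1)/5040)) s :=
        (Real.hasDerivAt_sin s).sub ((((hasDerivAt_id s).sub
          ((hasDerivAt_pow 3 s).div_const 6)).add ((hasDerivAt_pow 5 s).div_const 120)).sub
          ((hasDerivAt_pow 7 s).div_const 5040))
      convert this using 1
      ring)
    (fun s hs => by linarith [cos_ge6 hs])
    (by norm_num) ht
  linarith

private lemma Ptilde {u v : ℝ} (hu : 0 ≤ u) (huv : 4*u ≤ v) (hv : v ≤ 4.54) :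
    (1 - v/6 + v^2/120) * (3 - u/2 + u^2/24)
      ≤ (1 - u/6 + u^2/120 - u^3/5040) * (3 - v/2 + v^2/24 - v^3/720) := by
  nlinarith [sq_nonneg (v - 4*u), sq_nonneg v, sq_nonneg u, mul_nonneg hu (sub_nonneg.2 huv),
    sq_nonneg (v-u), mul_nonneg (mul_nonneg hu hu) hu, sq_nonneg (u*v),
    mul_nonneg (mul_nonneg hu hu) (sub_nonneg.2 huv),
    mul_nonneg (sub_nonneg.2 huv) (sub_nonneg.2 hv)]

private lemma Qtilde {u v : ℝ} (hu : 0 ≤ u) (huv : 4*u ≤ v) (hv : v ≤ 4.54) :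
    (1 - v/6 + v^2/120) * (1 + u/2) ≤ (1 - u/6) * (1 + v/2 - v^2/24) := by
  nlinarith [sq_nonneg (v - 4*u), mul_nonneg hu (sub_nonneg.2 huv), sq_nonneg v,
    mul_nonneg (sub_nonneg.2 huv) (sub_nonneg.2 hv), sq_nonneg u]

/-- `√3 sin t ≤ 2 + cos t` for all `t`. -/
private lemma psi_max (t : ℝ) : Real.sqrt 3 * Real.sin t ≤ 2 + Real.cos t := by
  have h1 : Real.sin t ^ 2 + Real.cos t ^ 2 = 1 := Real.sin_sq_add_cos_sq t
  have h3 : Real.sqrt 3 ^ 2 = 3 := Real.sq_sqrt (by norm_num)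
  nlinarith [sq_nonneg (Real.sqrt 3 * Real.cos t + Real.sin t),
    sq_nonneg (Real.sqrt 3 * Real.sin t - Real.cos t - 2), Real.sqrt_nonneg 3]

private lemma sqrt3_lt : Real.sqrt 3 < 1.7321 := by
  rw [show (1.7321:ℝ) = Real.sqrt (1.7321^2) from (Real.sqrt_sq (by norm_num)).symm]
  exact Real.sqrt_lt_sqrt (by norm_num) (by norm_num)

/-- The key trigonometric inequality: for `n ≥ 2` and `θ ∈ [0, π]`,
`sin nθ (2 + cos θ) ≤ n sin θ (2 + cos nθ)`. -/
private lemma key (n : ℕ) (hn : 2 ≤ n) {θ : ℝ} (h0 : 0 ≤ θ) (hπ : θ ≤ π) :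
    Real.sin (n*θ) * (2 + Real.cos θ) ≤ n * Real.sin θ * (2 + Real.cos (n*θ)) := by
  have hs : 0 ≤ Real.sin θ := Real.sin_nonneg_of_nonneg_of_le_pi h0 hπ
  have hn2 : (2:ℝ) ≤ n := by exact_mod_cast hn
  have hcθ : -1 ≤ Real.cos θ := Real.neg_one_le_cos θ
  have hcθ' : Real.cos θ ≤ 1 := Real.cos_le_one θ
  have hcnθ : -1 ≤ Real.cos (n*θ) := Real.neg_one_le_cos _
  rcases le_or_gt (Real.sin (n*θ)) 0 with h1 | h1
  · have hl : Real.sin (n*θ) * (2 + Real.cos θ) ≤ 0 :=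
      mul_nonpos_of_nonpos_of_nonneg h1 (by linarith)
    have hr : 0 ≤ (n:ℝ) * Real.sin θ * (2 + Real.cos (n*θ)) := by
      apply mul_nonneg (mul_nonneg (by linarith) hs) (by linarith)
    linarith
  rcases le_or_gt (Real.sqrt 3) ((n:ℝ) * Real.sin θ) with h2 | h2
  · -- easy case: n sin θ is large
    have hmax := psi_max ((n:ℝ)*θ)
    have h3 : Real.sqrt 3 ^ 2 = 3 := Real.sq_sqrt (by norm_num)
    have e1 : Real.sin (n*θ) * (2 + Real.cos θ) ≤ 3 * Real.sin (n*θ) := by nlinarith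
    have e2 : 3 * Real.sin (n*θ) ≤ Real.sqrt 3 * (2 + Real.cos (n*θ)) := by
      nlinarith [Real.sqrt_nonneg 3, mul_le_mul_of_nonneg_left hmax (Real.sqrt_nonneg 3)]
    have e3 : Real.sqrt 3 * (2 + Real.cos (n*θ)) ≤ (n:ℝ) * Real.sin θ * (2 + Real.cos (n*θ)) :=
      mul_le_mul_of_nonneg_right h2 (by linarith)
    linarith
  -- hard case : n sin θ < √3
  have hsmall : Real.sin θ < Real.sqrt 3 / 2 := by nlinarith [Real.sqrt_nonneg 3]
  have hpi315 := Real.pi_lt_d2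
  have hpi314 := Real.pi_gt_d6
  -- a generic small-angle estimate
  have angle_lt : ∀ φ : ℝ, 0 ≤ φ → φ ≤ π/2 → Real.sin φ < Real.sqrt 3 / 2 →
      (n:ℝ) * Real.sin φ < Real.sqrt 3 → φ < π/3 ∧ (n:ℝ) * φ < 2.13 := by
    intro φ hφ0 hφ2 hφs hφns
    have hφ3 : φ < π/3 := by
      by_contra hcon
      push_neg at hcon
      have := Real.sin_le_sin_of_le_of_le_pi_div_two (by linarith [Real.pi_pos]) hφ2 hcon
      rw [Real.sin_pi_div_three] at this
      linarith
    refine ⟨hφ3, ?_⟩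
    have hφ105 : φ < 1.05 := by linarith
    have hφsq : φ^2 ≤ 1.1025 := by nlinarith
    have hsφ : (0.81625 : ℝ) * φ ≤ Real.sin φ := by
      nlinarith [sin_ge3 hφ0, mul_le_mul_of_nonneg_left hφsq hφ0]
    have : (0.81625 : ℝ) * ((n:ℝ) * φ) ≤ (n:ℝ) * Real.sin φ := by nlinarith
    nlinarith [sqrt3_lt]
  rcases le_or_gt θ (π/2) with h3 | h3
  · -- θ ≤ π/2
    obtain ⟨hθ3, hb⟩ := angle_lt θ h0 h3 hsmall h2
    set b := (n:ℝ) * θ with hbdef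
    have hb0 : 0 ≤ b := by positivity
    have ha105 : θ < 1.05 := by linarith
    have e1 : Real.sin b ≤ b - b^3/6 + b^5/120 := sin_le5 hb0
    have e2 : Real.cos θ ≤ 1 - θ^2/2 + θ^4/24 := cos_le4 h0
    have e3 : θ - θ^3/6 + θ^5/120 - θ^7/5040 ≤ Real.sin θ := sin_ge7 h0
    have e4 : 1 - b^2/2 + b^4/24 - b^6/720 ≤ Real.cos b := cos_ge6 hb0
    have hθsq : θ^2 ≤ 1.1025 := by nlinarith
    have hθ3' : θ^3 ≤ 1.1025*θ := by nlinarith [mul_le_mul_of_nonneg_left hθsq h0]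
    have hθ6 : θ^6 ≤ 1.35 := by
      have := pow_le_pow_left₀ (sq_nonneg θ) hθsq 3
      nlinarith [this]
    have hθ7 : θ^7 ≤ 1.35*θ := by nlinarith [mul_le_mul_of_nonneg_left hθ6 h0]
    have hA : 0 ≤ θ - θ^3/6 + θ^5/120 - θ^7/5040 := by
      have h5 : 0 ≤ θ^5 := pow_nonneg h0 5
      linarith
    have hbsq : b^2 ≤ 4.5369 := by nlinarith
    have hb4 : 0 ≤ b^4 := pow_nonneg hb0 4
    have hb6 : b^6 ≤ 4.5369 * b^4 := by nlinarith [mul_le_mul_of_nonneg_left hbsq hb4]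
    have hC : 0 ≤ 3 - b^2/2 + b^4/24 - b^6/720 := by nlinarith [sq_nonneg b]
    have hL : Real.sin b * (2 + Real.cos θ) ≤ (b - b^3/6 + b^5/120) * (3 - θ^2/2 + θ^4/24) :=
      mul_le_mul e1 (by linarith) (by linarith) (by linarith)
    have hR : (θ - θ^3/6 + θ^5/120 - θ^7/5040) * (3 - b^2/2 + b^4/24 - b^6/720)
        ≤ Real.sin θ * (2 + Real.cos b) :=
      mul_le_mul e3 (by linarith) hC hs
    have hP := Ptilde (u := θ^2) (v := b^2) (sq_nonneg θ)
      (by rw [hbdef]; nlinarith [mul_le_mul hn2 hn2 (by norm_num) (by positivity), sq_nonneg θ])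
      (by nlinarith)
    have hP' := mul_le_mul_of_nonneg_left hP hb0
    have hRn := mul_le_mul_of_nonneg_left hR (by positivity : (0:ℝ) ≤ (n:ℝ))
    calc Real.sin (n*θ) * (2 + Real.cos θ)
        ≤ (b - b^3/6 + b^5/120) * (3 - θ^2/2 + θ^4/24) := hL
      _ = b * ((1 - b^2/6 + (b^2)^2/120) * (3 - θ^2/2 + (θ^2)^2/24)) := by ring
      _ ≤ b * ((1 - θ^2/6 + (θ^2)^2/120 - (θ^2)^3/5040)
            * (3 - b^2/2 + (b^2)^2/24 - (b^2)^3/720)) := hP'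
      _ = (n:ℝ) * ((θ - θ^3/6 + θ^5/120 - θ^7/5040) * (3 - b^2/2 + b^4/24 - b^6/720)) := by
          rw [hbdef]; ring
      _ ≤ (n:ℝ) * (Real.sin θ * (2 + Real.cos b)) := hRn
      _ = (n:ℝ) * Real.sin θ * (2 + Real.cos (n*θ)) := by rw [hbdef]; ring
  · -- θ > π/2 : work with ε = π - θ
    set ε := π - θ with hεdef
    have hε0 : 0 ≤ ε := by linarith
    have hε2 : ε ≤ π/2 := by linarith
    have hsε : Real.sin θ = Real.sin ε := by
      rw [hεdef, Real.sin_pi_sub]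
    have hcε : Real.cos θ = -Real.cos ε := by
      rw [hεdef, Real.cos_pi_sub]; ring
    obtain ⟨hε3, hb⟩ := angle_lt ε hε0 hε2 (by rw [← hsε]; exact hsmall) (by rw [← hsε]; exact h2)
    set b := (n:ℝ) * ε with hbdef
    have hb0 : 0 ≤ b := by positivity
    have hnθ : (n:ℝ) * θ = (n:ℝ) * π - b := by rw [hbdef, hεdef]; ring
    have hsinb : 0 ≤ Real.sin b :=
      Real.sin_nonneg_of_nonneg_of_le_pi hb0 (by nlinarith)
    rcases Nat.even_or_odd n with he | ho
    · -- n even : sin(nθ) = -sin(nε) ≤ 0, contradiction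
      exfalso
      have : Real.sin ((n:ℝ)*θ) = -((-1:ℝ)^n * Real.sin b) := by
        rw [hnθ]; exact Real.sin_nat_mul_pi_sub b n
      rw [he.neg_one_pow] at this
      rw [this] at h1
      linarith
    · -- n odd
      have hsin : Real.sin ((n:ℝ)*θ) = Real.sin b := by
        rw [hnθ, Real.sin_nat_mul_pi_sub, ho.neg_one_pow]; ring
      have hcos : Real.cos ((n:ℝ)*θ) = -Real.cos b := by
        rw [hnθ, Real.cos_nat_mul_pi_sub, ho.neg_one_pow]; ring
      rw [hsin, hcos, hsε, hcε]
      -- goal : sin b * (2 + -cos ε) ≤ n * sin ε * (2 + -cos b)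
      have hε105 : ε < 1.05 := by linarith
      have e1 : Real.sin b ≤ b - b^3/6 + b^5/120 := sin_le5 hb0
      have e2 : 1 - ε^2/2 ≤ Real.cos ε := Real.one_sub_sq_div_two_le_cos
      have e3 : ε - ε^3/6 ≤ Real.sin ε := sin_ge3 hε0
      have e4 : Real.cos b ≤ 1 - b^2/2 + b^4/24 := cos_le4 hb0
      have hεsq : ε^2 ≤ 1.1025 := by
        rw [sq]
        have := mul_le_mul hε105.le hε105.le hε0 (by norm_num : (0:ℝ) ≤ 1.05)
        linarith
      have hε3' : ε^3 ≤ 1.1025*ε := by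
        calc ε^3 = ε * ε^2 := by ring
          _ ≤ ε * 1.1025 := mul_le_mul_of_nonneg_left hεsq hε0
          _ = 1.1025*ε := by ring
      have hA : 0 ≤ ε - ε^3/6 := by linarith
      have hbsq : b^2 ≤ 4.5369 := by
        rw [sq]
        have := mul_le_mul hb.le hb.le hb0 (by norm_num : (0:ℝ) ≤ 2.13)
        linarith
      have hb4 : b^4 ≤ 4.5369*4.5369 := by
        calc b^4 = b^2*b^2 := by ring
          _ ≤ 4.5369*4.5369 := mul_le_mul hbsq hbsq (sq_nonneg b) (by norm_num)
      have hC : 0 ≤ 1 + b^2/2 - b^4/24 := by linarith [sq_nonneg b]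
      have hL : Real.sin b * (2 + -Real.cos ε) ≤ (b - b^3/6 + b^5/120) * (1 + ε^2/2) :=
        mul_le_mul e1 (by linarith) (by linarith) (by linarith)
      have hR : (ε - ε^3/6) * (1 + b^2/2 - b^4/24) ≤ Real.sin ε * (2 + -Real.cos b) :=
        mul_le_mul e3 (by linarith) hC (by linarith)
      have hn0' : (0:ℝ) ≤ (n:ℝ) := by linarith
      have hQ := Qtilde (u := ε^2) (v := b^2) (sq_nonneg ε)
        (by rw [hbdef]
            calc 4*ε^2 = 2*2*ε^2 := by ring
              _ ≤ (n:ℝ)*(n:ℝ)*ε^2 :=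
                  mul_le_mul_of_nonneg_right (mul_le_mul hn2 hn2 (by norm_num) hn0')
                    (sq_nonneg ε)
              _ = ((n:ℝ)*ε)^2 := by ring)
        (by linarith)
      have hQ' := mul_le_mul_of_nonneg_left hQ hb0
      have hRn := mul_le_mul_of_nonneg_left hR (by positivity : (0:ℝ) ≤ (n:ℝ))
      calc Real.sin b * (2 + -Real.cos ε)
          ≤ (b - b^3/6 + b^5/120) * (1 + ε^2/2) := hL
        _ = b * ((1 - b^2/6 + (b^2)^2/120) * (1 + ε^2/2)) := by ring
        _ ≤ b * ((1 - ε^2/6) * (1 + b^2/2 - (b^2)^2/24)) := hQ'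
        _ = (n:ℝ) * ((ε - ε^3/6) * (1 + b^2/2 - b^4/24)) := by rw [hbdef]; ring
        _ ≤ (n:ℝ) * (Real.sin ε * (2 + -Real.cos b)) := hRn
        _ = (n:ℝ) * Real.sin ε * (2 + -Real.cos b) := by ring

end Aux

/-- The `n`-th Chebyshev polynomial of the first kind, as a real polynomial. -/
noncomputable def chebT (n : ℕ) : Polynomial ℝ := Polynomial.Chebyshev.T ℝ (n : ℤ)

private lemma robertson_core (n : ℕ) (hn : 2 ≤ n) (θ : ℝ) (h0 : 0 < θ) (hπ : θ < π) :
    (chebT n).eval (Real.cos θ) + 2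
      - (Real.cos θ + 2) / (n : ℝ) ^ 2 * (derivative (chebT n)).eval (Real.cos θ) ≥ 0 := by
  have hs : 0 < Real.sin θ := Real.sin_pos_of_pos_of_lt_pi h0 hπ
  have hn0 : (0:ℝ) < (n:ℝ) := by positivity
  have hT : (chebT n).eval (Real.cos θ) = Real.cos ((n:ℝ)*θ) := by
    have := Polynomial.Chebyshev.T_real_cos θ (n:ℤ)
    rw [chebT, this]
    push_cast
    ring_nf
  have hU : (Polynomial.Chebyshev.U ℝ ((n:ℤ)-1)).eval (Real.cos θ) * Real.sin θ
      = Real.sin ((n:ℝ)*θ) := by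
    have := Polynomial.Chebyshev.U_real_cos θ ((n:ℤ)-1)
    rw [this]
    push_cast
    ring_nf
  have hD : (derivative (chebT n)).eval (Real.cos θ) * Real.sin θ
      = (n:ℝ) * Real.sin ((n:ℝ)*θ) := by
    rw [chebT, Polynomial.Chebyshev.T_derivative_eq_U, Polynomial.eval_mul, mul_assoc, hU]
    norm_num
  have hkey := key n hn h0.le hπ.le
  have hDval : (derivative (chebT n)).eval (Real.cos θ)
      = (n:ℝ) * Real.sin ((n:ℝ)*θ) / Real.sin θ := by
    rw [eq_div_iff hs.ne']
    exact hD
  have h2' : (Real.cos θ + 2) / (n : ℝ) ^ 2 * ((n:ℝ) * Real.sin ((n:ℝ)*θ) / Real.sin θ)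
      ≤ Real.cos ((n:ℝ)*θ) + 2 := by
    rw [div_mul_div_comm, div_le_iff₀ (by positivity)]
    nlinarith [mul_le_mul_of_nonneg_left hkey hn0.le]
  rw [ge_iff_le, hT, hDval]
  linarith

/-- Robertson's inequality in Chebyshev form: for every integer `n ≥ 2` and
every `x ∈ [-1,1]`, `T_n(x) + 2 - ((x+2)/n²) T_n'(x) ≥ 0`. -/
theorem robertson_chebyshev (n : ℕ) (hn : 2 ≤ n) (x : ℝ) (hx : x ∈ Set.Icc (-1 : ℝ) 1) :
    (chebT n).eval x + 2 - (x + 2) / (n : ℝ) ^ 2 * (derivative (chebT n)).eval x ≥ 0 := by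
  have hopen : ∀ y ∈ Set.Ioo (-1 : ℝ) 1,
      0 ≤ (chebT n).eval y + 2 - (y + 2) / (n : ℝ) ^ 2 * (derivative (chebT n)).eval y := by
    intro y hy
    have hy1 : -1 < y := hy.1
    have hy2 : y < 1 := hy.2
    have hθ0 : 0 < Real.arccos y := Real.arccos_pos.2 hy2
    have hθπ : Real.arccos y < π := by
      rcases lt_or_eq_of_le (Real.arccos_le_pi y) with h | h
      · exact h
      · exfalso
        have := Real.cos_arccos hy1.le hy2.le
        rw [h, Real.cos_pi] at this
        linarith
    have := robertson_core n hn (Real.arccos y) hθ0 hθπ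
    rw [Real.cos_arccos hy1.le hy2.le] at this
    linarith [this]
  have hclosed : IsClosed {y : ℝ |
      0 ≤ (chebT n).eval y + 2 - (y + 2) / (n : ℝ) ^ 2 * (derivative (chebT n)).eval y} := by
    apply isClosed_le continuous_const
    apply Continuous.sub
    · exact ((chebT n).continuous).add continuous_const
    · exact (((continuous_id.add continuous_const).div_const _)).mul
        ((derivative (chebT n)).continuous)
  have hsub : Set.Icc (-1 : ℝ) 1 ⊆ {y : ℝ |
      0 ≤ (chebT n).eval y + 2 - (y + 2) / (n : ℝ) ^ 2 * (derivative (chebT n)).eval y} := by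
    rw [← closure_Ioo (by norm_num : (-1:ℝ) ≠ 1)]
    exact closure_minimal hopen hclosed
  exact ge_iff_le.2 (hsub hx)
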